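/- arXiv:1311.6560 — 10 statements merged into one kernel-verified Lean document; each statement's English description precedes it below -/
import Mathlib

section
/- Let P be a poset with least element 0 and Z(P)^× ≠ ∅. If [x] and [y] are two distinct vertices of the reduced zero-divisor graph Γ_E(P), then the distance between [x] and [y] in Γ_E(P) equals the distance between x and y in the zero-divisor graph Γ(P). -/
/-- `L(x,y) = {z : z ≤ x ∧ z ≤ y}`, where the least element `0` of the poset is `⊥`. -/
def LSet (P : Type*) [PartialOrder P] [OrderBot P] (x y : P) : Set P := {z | z ≤ x ∧ z ≤ y}

theorem LSet_comm (P : Type*) [PartialOrder P] [OrderBot P] (x y : P) :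
    LSet P x y = LSet P y x := by
  ext z; exact ⟨fun h => ⟨h.2, h.1⟩, fun h => ⟨h.2, h.1⟩⟩

/-- The annihilator of `x`: `ann(x) = {y : L(x,y) = {0}}`. -/
def ann (P : Type*) [PartialOrder P] [OrderBot P] (x : P) : Set P := {y | LSet P x y = {⊥}}

theorem mem_ann_comm (P : Type*) [PartialOrder P] [OrderBot P] (x y : P) :
    y ∈ ann P x ↔ x ∈ ann P y := by
  simp only [ann, Set.mem_setOf_eq, LSet_comm P x y]

/-- The set `Z(P)^× = Z(P) \ {0}` of nonzero zero-divisors of `P`. -/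
def ZDivX (P : Type*) [PartialOrder P] [OrderBot P] : Set P :=
  {x | x ≠ ⊥ ∧ ∃ y : P, y ≠ ⊥ ∧ LSet P x y = {⊥}}

/-- The zero-divisor graph `Γ(P)` on `Z(P)^×`. -/
def zdGraph (P : Type*) [PartialOrder P] [OrderBot P] : SimpleGraph (ZDivX P) where
  Adj a b := (a : P) ≠ (b : P) ∧ LSet P a b = {⊥}
  symm := by
    constructor
    rintro a b ⟨h1, h2⟩
    exact ⟨fun h => h1 h.symm, by rw [LSet_comm]; exact h2⟩
  loopless := by constructor; rintro a ⟨h1, _⟩; exact h1 rfl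

/-- The equivalence `x ∼ y ↔ ann(x) = ann(y)` on `Z(P)^×`. -/
def annSetoid (P : Type*) [PartialOrder P] [OrderBot P] : Setoid (ZDivX P) where
  r a b := ann P a = ann P b
  iseqv := ⟨fun _ => rfl, Eq.symm, Eq.trans⟩

/-- The reduced zero-divisor graph `Γ_E(P)`, on equivalence classes of `Z(P)^×`. -/
def redGraph (P : Type*) [PartialOrder P] [OrderBot P] :
    SimpleGraph (Quotient (annSetoid P)) where
  Adj := Quotient.lift₂ (fun a b => LSet P (a : P) (b : P) = {⊥}) (by
    intro a b a' b' ha hb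
    have ha' : ann P (a : P) = ann P (a' : P) := ha
    have hb' : ann P (b : P) = ann P (b' : P) := hb
    apply propext
    constructor
    · intro h
      have h1 : (b : P) ∈ ann P (a : P) := h
      rw [ha', mem_ann_comm, hb', mem_ann_comm] at h1
      exact h1
    · intro h
      have h1 : (b' : P) ∈ ann P (a' : P) := h
      rw [← ha', mem_ann_comm, ← hb', mem_ann_comm] at h1
      exact h1)
  symm := by
    constructor
    intro x y
    refine Quotient.inductionOn₂ x y ?_
    intro a b h
    have h' : LSet P (a : P) (b : P) = {⊥} := h
    show LSet P (b : P) (a : P) = {⊥}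
    rw [LSet_comm]; exact h'
  loopless := by
    constructor
    intro x
    refine Quotient.inductionOn x ?_
    intro a h
    have h' : LSet P (a : P) (a : P) = {⊥} := h
    have hm : (a : P) ∈ LSet P (a : P) (a : P) := ⟨le_refl _, le_refl _⟩
    rw [h'] at hm
    exact a.2.1 hm

section Aux

variable (P : Type*) [PartialOrder P] [OrderBot P]

lemma red_adj_of_zd_adj {c d : ZDivX P} (h : (zdGraph P).Adj c d) :
    (redGraph P).Adj (Quotient.mk (annSetoid P) c) (Quotient.mk (annSetoid P) d) :=
  h.2

lemma zd_adj_of_red_adj {c d : ZDivX P}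
    (h : (redGraph P).Adj (Quotient.mk (annSetoid P) c) (Quotient.mk (annSetoid P) d)) :
    (zdGraph P).Adj c d := by
  have hne : Quotient.mk (annSetoid P) c ≠ Quotient.mk (annSetoid P) d := h.ne
  have hcd : c ≠ d := fun e => hne (by rw [e])
  have hL : LSet P (c : P) (d : P) = {⊥} := h
  exact ⟨fun e => hcd (Subtype.ext e), hL⟩

/-- quotient map as graph hom -/
def zdHom : (zdGraph P) →g (redGraph P) where
  toFun := Quotient.mk (annSetoid P)
  map_rel' h := red_adj_of_zd_adj P h

lemma lift_walk {x y : Quotient (annSetoid P)} (p : (redGraph P).Walk x y) :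
    ∀ (c d : ZDivX P), Quotient.mk (annSetoid P) c = x → Quotient.mk (annSetoid P) d = y →
      x ≠ y → ∃ q : (zdGraph P).Walk c d, (q.length : ℕ∞) ≤ (p.length : ℕ∞) := by
  induction p with
  | nil => intro c d hc hd hxy; exact absurd rfl hxy
  | @cons x z y h p' ih =>
    intro c d hc hd hxy
    subst hc; subst hd
    by_cases hz : z = Quotient.mk (annSetoid P) d
    · subst hz
      have hadj : (zdGraph P).Adj c d := zd_adj_of_red_adj P h
      refine ⟨hadj.toWalk, ?_⟩
      simp [SimpleGraph.Walk.length_cons]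
    · obtain ⟨e, he⟩ := Quotient.exists_rep z
      have hadj : (zdGraph P).Adj c e := zd_adj_of_red_adj P (he ▸ h)
      obtain ⟨q', hq'⟩ := ih e d he rfl hz
      refine ⟨SimpleGraph.Walk.cons hadj q', ?_⟩
      simp only [SimpleGraph.Walk.length_cons, Nat.cast_add, Nat.cast_one]
      exact add_le_add_left hq' 1

end Aux

/-- If `[x]` and `[y]` are two distinct vertices of `Γ_E(P)`, then the distance between
`[x]` and `[y]` in `Γ_E(P)` equals the distance between `x` and `y` in `Γ(P)`. -/
theorem stmt0 (P : Type*) [PartialOrder P] [OrderBot P] (hZ : (ZDivX P).Nonempty)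
    (a b : ZDivX P)
    (hab : Quotient.mk (annSetoid P) a ≠ Quotient.mk (annSetoid P) b) :
    (redGraph P).edist (Quotient.mk (annSetoid P) a) (Quotient.mk (annSetoid P) b)
      = (zdGraph P).edist a b := by
  apply le_antisymm
  · -- reduced distance ≤ zd distance: map walks via hom
    by_cases h : (zdGraph P).edist a b = ⊤
    · rw [h]; exact le_top
    · obtain ⟨q, hq⟩ := SimpleGraph.exists_walk_of_edist_ne_top h
      calc (redGraph P).edist _ _ ≤ ((q.map (zdHom P)).length : ℕ∞) :=
            SimpleGraph.edist_le _
        _ = (q.length : ℕ∞) := by rw [SimpleGraph.Walk.length_map]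
        _ = (zdGraph P).edist a b := hq
  · by_cases h : (redGraph P).edist (Quotient.mk (annSetoid P) a)
        (Quotient.mk (annSetoid P) b) = ⊤
    · rw [h]; exact le_top
    · obtain ⟨p, hp⟩ := SimpleGraph.exists_walk_of_edist_ne_top h
      obtain ⟨q, hq⟩ := lift_walk P p a b rfl rfl hab
      calc (zdGraph P).edist a b ≤ (q.length : ℕ∞) := SimpleGraph.edist_le _
        _ ≤ (p.length : ℕ∞) := hq
        _ = _ := hp
end

section
/- Let P be a poset with least element 0 and Z(P)^× ≠ ∅. Then the diameter of the reduced zero-divisor graph Γ_E(P) equals 1 if and only if ann(x) = ann(y) for all x, y ∈ Z(P)^× with L(x,y) ≠ {0}. -/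
/-- `diam Γ_E(P) = 1` iff `ann(x) = ann(y)` for all `x, y ∈ Z(P)^×` with `L(x,y) ≠ {0}`. -/
theorem stmt2 (P : Type*) [PartialOrder P] [OrderBot P] (hZ : (ZDivX P).Nonempty) :
    (redGraph P).ediam = 1 ↔
      ∀ x y : ZDivX P, LSet P (x : P) (y : P) ≠ {⊥} → ann P (x : P) = ann P (y : P) := by

  -- First: there exist two adjacent (hence distinct) classes, so ediam ≥ 1.
  obtain ⟨x, hx⟩ := hZ
  obtain ⟨hxne, y, hyne, hxy⟩ := hx
  have hyZ : y ∈ ZDivX P := ⟨hyne, x, hxne, by rw [LSet_comm]; exact hxy⟩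
  set a : ZDivX P := ⟨x, hxne, y, hyne, hxy⟩
  set b : ZDivX P := ⟨y, hyZ⟩
  have hannself : ∀ z : ZDivX P, (z : P) ∉ ann P (z : P) := by
    intro z hz
    have hm : (z : P) ∈ LSet P (z : P) (z : P) := ⟨le_refl _, le_refl _⟩
    rw [hz] at hm
    exact z.2.1 hm
  have hab : ann P (x : P) ≠ ann P (y : P) := by
    intro h
    apply hannself b
    show (y : P) ∈ ann P (y : P)
    rw [← h]
    exact hxy
  have hQab : (⟦a⟧ : Quotient (annSetoid P)) ≠ ⟦b⟧ := by
    intro h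
    exact hab (Quotient.eq.mp h)
  have hAdjab : (redGraph P).Adj ⟦a⟧ ⟦b⟧ := hxy
  have hge : 1 ≤ (redGraph P).ediam := by
    calc (1 : ℕ∞) = (redGraph P).edist ⟦a⟧ ⟦b⟧ :=
          (SimpleGraph.edist_eq_one_iff_adj.mpr hAdjab).symm
      _ ≤ _ := SimpleGraph.edist_le_ediam
  constructor
  · intro hdiam u v huv
    by_contra hne
    have hQ : (⟦u⟧ : Quotient (annSetoid P)) ≠ ⟦v⟧ := fun h => hne (Quotient.eq.mp h)
    have hle : (redGraph P).edist ⟦u⟧ ⟦v⟧ ≤ 1 := hdiam ▸ SimpleGraph.edist_le_ediam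
    have hpos : (redGraph P).edist ⟦u⟧ ⟦v⟧ ≠ 0 :=
      fun h => hQ (SimpleGraph.edist_eq_zero_iff.mp h)
    have h1 : (redGraph P).edist ⟦u⟧ ⟦v⟧ = 1 :=
      le_antisymm hle (Order.one_le_iff_pos.mpr (pos_iff_ne_zero.mpr hpos))
    have hadj : (redGraph P).Adj ⟦u⟧ ⟦v⟧ := SimpleGraph.edist_eq_one_iff_adj.mp h1
    exact huv hadj
  · intro hcond
    refine le_antisymm ?_ hge
    apply SimpleGraph.ediam_le_of_edist_le
    intro q q'
    refine Quotient.inductionOn₂ q q' ?_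
    intro u v
    by_cases h : (⟦u⟧ : Quotient (annSetoid P)) = ⟦v⟧
    · rw [h, SimpleGraph.edist_self]; exact zero_le_one
    · have hne : ann P (u : P) ≠ ann P (v : P) := fun he => h (Quotient.sound he)
      have hL : LSet P (u : P) (v : P) = {⊥} := by
        by_contra hL
        exact hne (hcond u v hL)
      have hadj : (redGraph P).Adj ⟦u⟧ ⟦v⟧ := hL
      exact le_of_eq (SimpleGraph.edist_eq_one_iff_adj.mpr hadj)
end

section
/- Let P be a poset with least element 0 and Z(P)^× ≠ ∅. Then the following are equivalent: (i) the girth of the reduced zero-divisor graph Γ_E(P) is 3; (ii) the girth of the zero-divisor graph Γ(P) is 3; (iii) Γ_E(P) has at least 3 vertices. Consequently, the girth of Γ_E(P) is ∞ (i.e., Γ_E(P) is acyclic) if and only if Γ_E(P) has exactly 2 vertices. -/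
section GraphAux
open SimpleGraph

lemma aux_egirth_eq_three_of_triangle {V : Type*} {G : SimpleGraph V} {a b c : V}
    (h1 : G.Adj a b) (h2 : G.Adj b c) (h3 : G.Adj c a) : G.egirth = 3 := by
  refine le_antisymm ?_ G.three_le_egirth
  let w : G.Walk a a := .cons h1 (.cons h2 (.cons h3 .nil))
  have hw : w.IsCycle := by
    rw [Walk.isCycle_def]
    have n1 := h1.ne
    have n2 := h2.ne
    have n3 := h3.ne
    have m1 := h1.ne'
    have m2 := h2.ne'
    have m3 := h3.ne'
    refine ⟨?_, by simp [w], ?_⟩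
    · rw [Walk.isTrail_def]
      simp only [w, Walk.edges_cons, Walk.edges_nil, List.nodup_cons, List.mem_cons,
        List.not_mem_nil, or_false, List.nodup_nil, and_true, Sym2.eq, Sym2.rel_iff',
        Prod.mk.injEq, Prod.swap_prod_mk]
      aesop
    · simp only [w, Walk.support_cons, Walk.support_nil, List.tail_cons, List.nodup_cons,
        List.mem_cons, List.not_mem_nil, or_false, List.nodup_nil, and_true,
        List.mem_singleton, not_or]
      aesop
  have : G.egirth ≤ (w.length : ℕ∞) := by
    rw [SimpleGraph.egirth]
    exact iInf_le_of_le a (iInf_le_of_le w (iInf_le_of_le hw le_rfl))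
  simpa [w] using this

lemma aux_triangle_of_egirth_eq_three {V : Type*} {G : SimpleGraph V} (h : G.egirth = 3) :
    ∃ a b c, G.Adj a b ∧ G.Adj b c ∧ G.Adj c a := by
  have hna : ¬ G.IsAcyclic := by
    rw [← egirth_eq_top]
    rw [h]; decide
  obtain ⟨a, w, hw, hlen⟩ := exists_egirth_eq_length.2 hna
  rw [h] at hlen
  have hl : w.length = 3 := by exact_mod_cast hlen.symm
  clear hw hlen
  cases w with
  | nil => simp at hl
  | cons h1 w1 =>
    cases w1 with
    | nil => simp at hl
    | cons h2 w2 =>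
      cases w2 with
      | nil => simp at hl
      | cons h3 w3 =>
        cases w3 with
        | nil => exact ⟨_, _, _, h1, h2, h3⟩
        | cons h4 w4 => simp [Walk.length_cons] at hl

lemma aux_three_le_enatCard {V : Type*} {a b c : V} (hab : a ≠ b) (hac : a ≠ c) (hbc : b ≠ c) :
    3 ≤ ENat.card V := by
  rw [← Set.encard_univ]
  have h3 : ({a, b, c} : Set V).encard = 3 := by
    rw [Set.encard_insert_of_notMem (by simp [hab, hac]), Set.encard_pair hbc]
    rfl
  exact h3 ▸ Set.encard_le_encard (Set.subset_univ _)

lemma aux_exists_three_of_card {V : Type*} (h : 3 ≤ ENat.card V) :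
    ∃ a b c : V, a ≠ b ∧ a ≠ c ∧ b ≠ c := by
  rw [← Set.encard_univ] at h
  obtain ⟨t, -, ht⟩ := Set.exists_subset_encard_eq h
  obtain ⟨a, b, c, hab, hac, hbc, -⟩ := Set.encard_eq_three.1 ht
  exact ⟨a, b, c, hab, hac, hbc⟩

lemma aux_three_le_card_of_not_acyclic {V : Type*} {G : SimpleGraph V} (h : ¬ G.IsAcyclic) :
    3 ≤ ENat.card V := by
  obtain ⟨a, w, hw, -⟩ := exists_egirth_eq_length.2 h
  have h3 : 3 ≤ w.length := hw.three_le_length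
  have hnd : w.support.tail.Nodup := hw.support_nodup
  have hlen : w.support.tail.length = w.length := by
    have := w.length_support
    simp only [List.length_tail, this]
    omega
  set l := w.support.tail with hl
  have h3' : 3 ≤ l.length := by omega
  have inj := List.nodup_iff_injective_get.1 hnd
  refine aux_three_le_enatCard (a := l.get ⟨0, by omega⟩) (b := l.get ⟨1, by omega⟩)
    (c := l.get ⟨2, by omega⟩) ?_ ?_ ?_ <;>
    · intro hEq
      have := inj hEq
      simp [Fin.ext_iff] at this

end GraphAux

section PosetAux
variable {P : Type*} [PartialOrder P] [OrderBot P]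

lemma aux_orth_iff {x y : P} : LSet P x y = {⊥} ↔ ∀ z, z ≤ x → z ≤ y → z = ⊥ := by
  constructor
  · intro h z hzx hzy
    have hm : z ∈ LSet P x y := ⟨hzx, hzy⟩
    rw [h] at hm; exact hm
  · intro h; ext z
    simp only [Set.mem_singleton_iff]
    exact ⟨fun hz => h z hz.1 hz.2, fun hz => hz ▸ ⟨bot_le, bot_le⟩⟩

lemma aux_orth_symm {x y : P} (h : LSet P x y = {⊥}) : LSet P y x = {⊥} := by
  rw [LSet_comm]; exact h

lemma aux_not_orth {x y : P} (h : LSet P x y ≠ {⊥}) : ∃ z, z ≠ ⊥ ∧ z ≤ x ∧ z ≤ y := by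
  by_contra h'
  push_neg at h'
  exact h (aux_orth_iff.2 fun z hzx hzy => by
    by_contra hz
    exact (h' z hz hzx) hzy)

lemma aux_orth_mono_left {x x' y : P} (hx : x' ≤ x) (h : LSet P x y = {⊥}) :
    LSet P x' y = {⊥} :=
  aux_orth_iff.2 fun z hz1 hz2 => aux_orth_iff.1 h z (hz1.trans hx) hz2

lemma aux_orth_mono_right {x y y' : P} (hy : y' ≤ y) (h : LSet P x y = {⊥}) :
    LSet P x y' = {⊥} :=
  aux_orth_symm (aux_orth_mono_left hy (aux_orth_symm h))

lemma aux_not_orth_self {x : P} (hx : x ≠ ⊥) : LSet P x x ≠ {⊥} :=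
  fun h => hx (aux_orth_iff.1 h x le_rfl le_rfl)

/-- Existence of a "triangle": three nonzero pairwise orthogonal elements. -/
def HasTri (P : Type*) [PartialOrder P] [OrderBot P] : Prop :=
  ∃ a b c : P, a ≠ ⊥ ∧ b ≠ ⊥ ∧ c ≠ ⊥ ∧
    LSet P a b = {⊥} ∧ LSet P a c = {⊥} ∧ LSet P b c = {⊥}

lemma aux_ann_ne_iff {x y : P} :
    ann P x ≠ ann P y ↔ ∃ s, (LSet P s x = {⊥} ∧ LSet P s y ≠ {⊥}) ∨
      (LSet P s y = {⊥} ∧ LSet P s x ≠ {⊥}) := by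
  constructor
  · intro h
    by_contra h'
    push_neg at h'
    apply h
    ext w
    simp only [ann, Set.mem_setOf_eq]
    have hw := h' w
    rw [LSet_comm P w x, LSet_comm P w y] at hw
    tauto
  · rintro ⟨s, hs⟩ hEq
    have : s ∈ ann P x ↔ s ∈ ann P y := by rw [hEq]
    simp only [ann, Set.mem_setOf_eq, LSet_comm P x s, LSet_comm P y s] at this
    tauto

/-- Key lemma: an edge `u ⊥ v`, a vertex `c` with `ann v ≠ ann c`, and an element `s`
orthogonal to `c` but not to `u`, produce a triangle. -/
lemma aux_lemmaT {u v c : P} (hv : v ≠ ⊥) (hc : c ≠ ⊥)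
    (huv : LSet P u v = {⊥}) (hvc : ann P v ≠ ann P c)
    {s : P} (hs : LSet P s c = {⊥}) (hsu : LSet P s u ≠ {⊥}) : HasTri P := by
  obtain ⟨t, ht0, hts, htu⟩ := aux_not_orth hsu
  have htc : LSet P t c = {⊥} := aux_orth_mono_left hts hs
  have htv : LSet P t v = {⊥} := aux_orth_mono_left htu huv
  obtain ⟨s', hcase⟩ := aux_ann_ne_iff.1 hvc
  rcases hcase with ⟨h1, h2⟩ | ⟨h1, h2⟩
  · -- s' ⊥ v, ¬ s' ⊥ c : t' ≤ s', t' ≤ c, t' ⊥ v; triangle t, t', v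
    obtain ⟨t', ht'0, ht's, ht'c⟩ := aux_not_orth h2
    have ht'v : LSet P t' v = {⊥} := aux_orth_mono_left ht's h1
    have htt' : LSet P t t' = {⊥} := aux_orth_mono_right ht'c htc
    exact ⟨t, t', v, ht0, ht'0, hv, htt', htv, ht'v⟩
  · -- s' ⊥ c, ¬ s' ⊥ v : t' ≤ s', t' ≤ v, t' ⊥ c; triangle t, t', c
    obtain ⟨t', ht'0, ht's, ht'v⟩ := aux_not_orth h2
    have ht'c : LSet P t' c = {⊥} := aux_orth_mono_left ht's h1
    have htt' : LSet P t t' = {⊥} :=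
      aux_orth_iff.2 fun z hz1 hz2 =>
        aux_orth_iff.1 huv z (hz1.trans htu) (hz2.trans ht'v)
    exact ⟨t, t', c, ht0, ht'0, hc, htt', htc, ht'c⟩

/-- Main lemma: an edge `a ⊥ b` and a zero-divisor `c` whose annihilator differs from both
produces a triangle. -/
lemma aux_tri_main {a b c : P} (ha : a ≠ ⊥) (hb : b ≠ ⊥)
    (hab : LSet P a b = {⊥}) (hcZ : c ∈ ZDivX P)
    (hac : ann P a ≠ ann P c) (hbc : ann P b ≠ ann P c) : HasTri P := by
  obtain ⟨hc0, q, hq0, hcq⟩ := hcZ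
  by_cases h1 : ∃ s, LSet P s c = {⊥} ∧ LSet P s a ≠ {⊥}
  · obtain ⟨s, hs1, hs2⟩ := h1
    exact aux_lemmaT hb hc0 hab hbc hs1 hs2
  by_cases h2 : ∃ s, LSet P s c = {⊥} ∧ LSet P s b ≠ {⊥}
  · obtain ⟨s, hs1, hs2⟩ := h2
    exact aux_lemmaT ha hc0 (aux_orth_symm hab) hac hs1 hs2
  push_neg at h1 h2
  -- from ann a ≠ ann c, get s ⊥ a with ¬ s ⊥ c
  obtain ⟨s, hsc⟩ := aux_ann_ne_iff.1 hac
  have hs : LSet P s a = {⊥} ∧ LSet P s c ≠ {⊥} := by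
    rcases hsc with h | ⟨hh1, hh2⟩
    · exact h
    · exact absurd (h1 s hh1) hh2
  obtain ⟨hsa, hsc'⟩ := hs
  obtain ⟨t, ht0, hts, htc⟩ := aux_not_orth hsc'
  have hta : LSet P t a = {⊥} := aux_orth_mono_left hts hsa
  by_cases hbt : LSet P b t = {⊥}
  · exact ⟨a, b, t, ha, hb, ht0, hab, aux_orth_symm hta, hbt⟩
  obtain ⟨w, hw0, hwb, hwt⟩ := aux_not_orth hbt
  -- from ann b ≠ ann c, get s' ⊥ b with ¬ s' ⊥ c
  obtain ⟨s', hs'c⟩ := aux_ann_ne_iff.1 hbc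
  have hs' : LSet P s' b = {⊥} ∧ LSet P s' c ≠ {⊥} := by
    rcases hs'c with h | ⟨hh1, hh2⟩
    · exact h
    · exact absurd (h2 s' hh1) hh2
  obtain ⟨hs'b, hs'c'⟩ := hs'
  obtain ⟨t', ht'0, ht's, ht'c⟩ := aux_not_orth hs'c'
  have ht'b : LSet P t' b = {⊥} := aux_orth_mono_left ht's hs'b
  by_cases hat' : LSet P a t' = {⊥}
  · exact ⟨a, b, t', ha, hb, ht'0, hab, hat', aux_orth_symm ht'b⟩
  obtain ⟨w', hw'0, hw'a, hw't'⟩ := aux_not_orth hat'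
  have hww' : LSet P w w' = {⊥} :=
    aux_orth_iff.2 fun z hz1 hz2 =>
      aux_orth_iff.1 hab z (hz2.trans hw'a) (hz1.trans hwb)
  have hwc : w ≤ c := hwt.trans htc
  have hw'c : w' ≤ c := hw't'.trans ht'c
  have hwq : LSet P w q = {⊥} := aux_orth_mono_left hwc hcq
  have hw'q : LSet P w' q = {⊥} := aux_orth_mono_left hw'c hcq
  exact ⟨w, w', q, hw0, hw'0, hq0, hww', hwq, hw'q⟩

end PosetAux

section Glue
variable {P : Type*} [PartialOrder P] [OrderBot P]

lemma aux_mem_zdivx {a b : P} (ha : a ≠ ⊥) (hb : b ≠ ⊥) (hab : LSet P a b = {⊥}) :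
    a ∈ ZDivX P := ⟨ha, b, hb, hab⟩

lemma aux_ann_ne_of_orth {a b : P} (hb : b ≠ ⊥) (hab : LSet P a b = {⊥}) :
    ann P a ≠ ann P b := by
  intro h
  have hmem : b ∈ ann P a := hab
  rw [h] at hmem
  exact aux_not_orth_self hb hmem

lemma aux_ne_of_orth {a b : P} (ha : a ≠ ⊥) (hab : LSet P a b = {⊥}) : a ≠ b := by
  rintro rfl
  exact aux_not_orth_self ha hab

lemma aux_zd_tri (h : HasTri P) :
    ∃ A B C : ZDivX P, (zdGraph P).Adj A B ∧ (zdGraph P).Adj B C ∧ (zdGraph P).Adj C A := by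
  obtain ⟨a, b, c, ha, hb, hc, hab, hac, hbc⟩ := h
  refine ⟨⟨a, aux_mem_zdivx ha hb hab⟩, ⟨b, aux_mem_zdivx hb hc hbc⟩,
    ⟨c, aux_mem_zdivx hc ha (aux_orth_symm hac)⟩,
    ⟨aux_ne_of_orth ha hab, hab⟩, ⟨aux_ne_of_orth hb hbc, hbc⟩,
    ⟨(aux_ne_of_orth ha hac).symm, aux_orth_symm hac⟩⟩

lemma aux_red_adj_mk {X Y : ZDivX P} (h : LSet P (X : P) (Y : P) = {⊥}) :
    (redGraph P).Adj (Quotient.mk (annSetoid P) X) (Quotient.mk (annSetoid P) Y) := h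

lemma aux_red_adj_mk' {X Y : ZDivX P}
    (h : (redGraph P).Adj (Quotient.mk (annSetoid P) X) (Quotient.mk (annSetoid P) Y)) :
    LSet P (X : P) (Y : P) = {⊥} := h

lemma aux_red_tri (h : HasTri P) :
    ∃ A B C : Quotient (annSetoid P),
      (redGraph P).Adj A B ∧ (redGraph P).Adj B C ∧ (redGraph P).Adj C A := by
  obtain ⟨A, B, C, h1, h2, h3⟩ := aux_zd_tri h
  exact ⟨Quotient.mk _ A, Quotient.mk _ B, Quotient.mk _ C,
    aux_red_adj_mk h1.2, aux_red_adj_mk h2.2, aux_red_adj_mk h3.2⟩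

lemma aux_tri_of_red
    (h : ∃ A B C : Quotient (annSetoid P),
      (redGraph P).Adj A B ∧ (redGraph P).Adj B C ∧ (redGraph P).Adj C A) : HasTri P := by
  obtain ⟨A, B, C, h1, h2, h3⟩ := h
  induction A using Quotient.inductionOn with | h X =>
  induction B using Quotient.inductionOn with | h Y =>
  induction C using Quotient.inductionOn with | h Z =>
  exact ⟨X, Y, Z, X.2.1, Y.2.1, Z.2.1, aux_red_adj_mk' h1,
    aux_orth_symm (aux_red_adj_mk' h3), aux_red_adj_mk' h2⟩

lemma aux_tri_of_zd
    (h : ∃ A B C : ZDivX P,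
      (zdGraph P).Adj A B ∧ (zdGraph P).Adj B C ∧ (zdGraph P).Adj C A) : HasTri P := by
  obtain ⟨A, B, C, h1, h2, h3⟩ := h
  exact ⟨A, B, C, A.2.1, B.2.1, C.2.1, h1.2, aux_orth_symm h3.2, h2.2⟩

lemma aux_card_of_tri (h : HasTri P) : 3 ≤ ENat.card (Quotient (annSetoid P)) := by
  obtain ⟨A, B, C, h1, h2, h3⟩ := aux_red_tri h
  exact aux_three_le_enatCard h1.ne h3.ne' h2.ne

lemma aux_tri_of_card (h : 3 ≤ ENat.card (Quotient (annSetoid P))) : HasTri P := by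
  obtain ⟨q1, q2, q3, h12, h13, h23⟩ := aux_exists_three_of_card h
  obtain ⟨X1, rfl⟩ := q1.exists_rep
  obtain ⟨X2, rfl⟩ := q2.exists_rep
  obtain ⟨X3, rfl⟩ := q3.exists_rep
  have a12 : ann P (X1 : P) ≠ ann P (X2 : P) := fun hEq => h12 (Quotient.sound hEq)
  have a13 : ann P (X1 : P) ≠ ann P (X3 : P) := fun hEq => h13 (Quotient.sound hEq)
  have a23 : ann P (X2 : P) ≠ ann P (X3 : P) := fun hEq => h23 (Quotient.sound hEq)
  obtain ⟨hx0, y, hy0, hxy⟩ := X1.2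
  by_cases hy2 : ann P (X2 : P) = ann P y
  · exact aux_tri_main hx0 hy0 hxy X3.2 a13 (fun hEq => a23 (hy2.trans hEq))
  · exact aux_tri_main hx0 hy0 hxy X2.2 a12 (fun hEq => hy2 hEq.symm)

lemma aux_two_le_card (hZ : (ZDivX P).Nonempty) :
    2 ≤ ENat.card (Quotient (annSetoid P)) := by
  obtain ⟨x, hx⟩ := hZ
  obtain ⟨hx0, y, hy0, hxy⟩ := hx
  have hxZ : x ∈ ZDivX P := ⟨hx0, y, hy0, hxy⟩
  have hyZ : y ∈ ZDivX P := ⟨hy0, x, hx0, aux_orth_symm hxy⟩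
  have hann : ann P x ≠ ann P y := aux_ann_ne_of_orth hy0 hxy
  have hne : (Quotient.mk (annSetoid P) ⟨x, hxZ⟩) ≠ (Quotient.mk (annSetoid P) ⟨y, hyZ⟩) :=
    fun h => hann (Quotient.exact h)
  rw [← Set.encard_univ]
  exact (Set.encard_pair hne) ▸ Set.encard_le_encard (Set.subset_univ _)

end Glue

/-- `girth Γ_E(P) = 3 ↔ girth Γ(P) = 3 ↔ |V(Γ_E(P))| ≥ 3`; consequently,
`girth Γ_E(P) = ∞` iff `|V(Γ_E(P))| = 2`. -/
theorem stmt3 (P : Type*) [PartialOrder P] [OrderBot P] (hZ : (ZDivX P).Nonempty) :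
    (((redGraph P).egirth = 3 ↔ (zdGraph P).egirth = 3) ∧
      ((redGraph P).egirth = 3 ↔ 3 ≤ ENat.card (Quotient (annSetoid P)))) ∧
    ((redGraph P).egirth = ⊤ ↔ ENat.card (Quotient (annSetoid P)) = 2) := by
  classical
  have hred : HasTri P ↔ (redGraph P).egirth = 3 := by
    constructor
    · intro h
      obtain ⟨A, B, C, h1, h2, h3⟩ := aux_red_tri h
      exact aux_egirth_eq_three_of_triangle h1 h2 h3
    · intro h
      exact aux_tri_of_red (aux_triangle_of_egirth_eq_three h)
  have hzd : HasTri P ↔ (zdGraph P).egirth = 3 := by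
    constructor
    · intro h
      obtain ⟨A, B, C, h1, h2, h3⟩ := aux_zd_tri h
      exact aux_egirth_eq_three_of_triangle h1 h2 h3
    · intro h
      exact aux_tri_of_zd (aux_triangle_of_egirth_eq_three h)
  have hcard : HasTri P ↔ 3 ≤ ENat.card (Quotient (annSetoid P)) :=
    ⟨aux_card_of_tri, aux_tri_of_card⟩
  refine ⟨⟨hred.symm.trans hzd, hred.symm.trans hcard⟩, ?_, ?_⟩
  · intro htop
    have h3 : ¬ 3 ≤ ENat.card (Quotient (annSetoid P)) := by
      intro hc
      have := hred.1 (hcard.2 hc)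
      rw [htop] at this
      exact (by decide : (⊤ : ℕ∞) ≠ 3) this
    refine le_antisymm ?_ (aux_two_le_card hZ)
    by_contra hlt
    push_neg at hlt
    exact h3 (Order.add_one_le_of_lt hlt)
  · intro h2
    rw [SimpleGraph.egirth_eq_top]
    by_contra hcyc
    have h3 := aux_three_le_card_of_not_acyclic hcyc
    rw [h2] at h3
    exact (by decide : ¬ (3 : ℕ∞) ≤ 2) h3
end

section
/- Let P be a poset with least element 0 and Z(P)^× ≠ ∅. Then no two distinct vertices of the reduced zero-divisor graph Γ_E(P) have the same neighborhood; equivalently, for [x], [y] ∈ V(Γ_E(P)), one has nbd([x]) = nbd([y]) if and only if ann(x) = ann(y). -/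
theorem bot_mem_ann (P : Type*) [PartialOrder P] [OrderBot P] (x : P) : ⊥ ∈ ann P x := by
  show LSet P x ⊥ = {⊥}
  ext z
  simp [LSet, le_bot_iff]
  intro h; subst h; exact bot_le

theorem mem_ZDivX_of_mem_ann (P : Type*) [PartialOrder P] [OrderBot P] (a : ZDivX P) (y : P)
    (hy : y ≠ ⊥) (h : y ∈ ann P (a : P)) : y ∈ ZDivX P :=
  ⟨hy, a, a.2.1, by rw [LSet_comm]; exact h⟩

theorem nbd_sub (P : Type*) [PartialOrder P] [OrderBot P] (a b : ZDivX P)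
    (h : (redGraph P).neighborSet (Quotient.mk (annSetoid P) a)
        = (redGraph P).neighborSet (Quotient.mk (annSetoid P) b)) :
    ann P (a : P) ⊆ ann P (b : P) := by
  intro y hy
  by_cases hyb : y = ⊥
  · subst hyb; exact bot_mem_ann P _
  · have hyZ : y ∈ ZDivX P := mem_ZDivX_of_mem_ann P a y hyb hy
    have hmem : Quotient.mk (annSetoid P) (⟨y, hyZ⟩ : ZDivX P)
        ∈ (redGraph P).neighborSet (Quotient.mk (annSetoid P) a) := hy
    rw [h] at hmem
    exact hmem

/-- No two distinct vertices of `Γ_E(P)` have the same neighborhood; equivalently,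
`nbd([x]) = nbd([y])` iff `ann(x) = ann(y)`. -/
theorem stmt5 (P : Type*) [PartialOrder P] [OrderBot P] (hZ : (ZDivX P).Nonempty) :
    (∀ u v : Quotient (annSetoid P),
        (redGraph P).neighborSet u = (redGraph P).neighborSet v → u = v) ∧
    (∀ a b : ZDivX P,
        (redGraph P).neighborSet (Quotient.mk (annSetoid P) a)
            = (redGraph P).neighborSet (Quotient.mk (annSetoid P) b)
          ↔ ann P (a : P) = ann P (b : P)) := by
  have key : ∀ a b : ZDivX P,
      (redGraph P).neighborSet (Quotient.mk (annSetoid P) a)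
          = (redGraph P).neighborSet (Quotient.mk (annSetoid P) b) →
      ann P (a : P) = ann P (b : P) := fun a b h =>
    Set.Subset.antisymm (nbd_sub P a b h) (nbd_sub P b a h.symm)
  constructor
  · intro u v
    refine Quotient.inductionOn₂ u v ?_
    intro a b h
    exact Quotient.sound (key a b h)
  · intro a b
    refine ⟨key a b, fun h => ?_⟩
    have : Quotient.mk (annSetoid P) a = Quotient.mk (annSetoid P) b := Quotient.sound h
    rw [this]
end

section
/- Let P be a poset with least element 0 and Z(P)^× ≠ ∅ such that the reduced zero-divisor graph Γ_E(P) has at least 3 vertices. Then Γ_E(P) is not a star graph, i.e., Γ_E(P) is not isomorphic to K_{1,n} for any n. -/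
section Helpers

variable {P : Type*} [PartialOrder P] [OrderBot P]

lemma bot_mem_LSet (x y : P) : ⊥ ∈ LSet P x y := ⟨bot_le, bot_le⟩

lemma LSet_bot_of_le {w y x : P} (hw : w ≤ y) (h : LSet P y x = {⊥}) :
    LSet P w x = {⊥} := by
  apply Set.eq_singleton_iff_unique_mem.mpr
  refine ⟨bot_mem_LSet _ _, fun z hz => ?_⟩
  have hz' : z ∈ LSet P y x := ⟨hz.1.trans hw, hz.2⟩
  rw [h] at hz'
  exact hz'

lemma LSet_bot_right (y : P) : LSet P y ⊥ = {⊥} := by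
  apply Set.eq_singleton_iff_unique_mem.mpr
  exact ⟨bot_mem_LSet _ _, fun z hz => le_bot_iff.mp hz.2⟩

lemma bot_mem_ann_s7 (y : P) : (⊥ : P) ∈ ann P y := LSet_bot_right y

end Helpers

/-- If `Γ_E(P)` has at least 3 vertices, then `Γ_E(P)` is not a star graph `K_{1,n}`. -/
theorem stmt7 (P : Type*) [PartialOrder P] [OrderBot P] (hZ : (ZDivX P).Nonempty)
    (h3 : 3 ≤ ENat.card (Quotient (annSetoid P))) :
    ∀ (W : Type*), ¬ Nonempty (redGraph P ≃g completeBipartiteGraph (Fin 1) W) := by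
  intro W hW
  obtain ⟨e⟩ := hW
  set Q := Quotient (annSetoid P) with hQ
  -- three distinct vertices
  have h3' : (3 : Cardinal) ≤ Cardinal.mk Q := by
    have h := (Cardinal.enat_gc 3 (Cardinal.mk Q)).mpr h3
    simpa using h
  set c : Q := e.symm (Sum.inl 0) with hc
  have ecq : e c = Sum.inl 0 := e.apply_symm_apply _
  obtain ⟨q1, hq1c, -⟩ := Cardinal.three_le h3' c c
  obtain ⟨q2, hq2c, hq21⟩ := Cardinal.three_le h3' c q1
  -- every non-center vertex maps to the right side
  have leaf : ∀ q : Q, q ≠ c → ∃ w : W, e q = Sum.inr w := by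
    intro q hq
    rcases hx : e q with i | w
    · exfalso
      apply hq
      apply e.injective
      rw [hx, ecq, Subsingleton.elim i 0]
    · exact ⟨w, rfl⟩
  -- the unique neighbor of a leaf is the center
  have hnb : ∀ q r : Q, q ≠ c → (redGraph P).Adj q r → r = c := by
    intro q r hq hadj
    obtain ⟨w, hw⟩ := leaf q hq
    have hbadj := e.map_adj_iff.mpr hadj
    rcases hr : e r with i | w'
    · apply e.injective
      rw [hr, ecq, Subsingleton.elim i 0]
    · rw [hw, hr] at hbadj
      simp [completeBipartiteGraph] at hbadj
  -- center adjacent to all leaves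
  have hadjc : ∀ q : Q, q ≠ c → (redGraph P).Adj c q := by
    intro q hq
    obtain ⟨w, hw⟩ := leaf q hq
    apply e.map_adj_iff.mp
    rw [ecq, hw]
    simp [completeBipartiteGraph]
  obtain ⟨x0, hx0⟩ := Quotient.exists_rep c
  obtain ⟨y0, hy0⟩ := Quotient.exists_rep q1
  obtain ⟨z0, hz0⟩ := Quotient.exists_rep q2
  have hxy : LSet P (x0 : P) (y0 : P) = {⊥} := by
    have := hadjc q1 hq1c
    rw [← hx0, ← hy0] at this
    exact this
  have hxz : LSet P (x0 : P) (z0 : P) = {⊥} := by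
    have := hadjc q2 hq2c
    rw [← hx0, ← hz0] at this
    exact this
  have hyz : LSet P (y0 : P) (z0 : P) ≠ {⊥} := by
    intro h
    have hadj : (redGraph P).Adj q1 q2 := by
      rw [← hy0, ← hz0]; exact h
    exact hq2c (hnb q1 q2 hq1c hadj)
  -- get a nonzero element below both y0 and z0
  have hw : ∃ w : P, w ∈ LSet P (y0 : P) (z0 : P) ∧ w ≠ ⊥ := by
    by_contra h
    push_neg at h
    apply hyz
    apply Set.eq_singleton_iff_unique_mem.mpr
    exact ⟨bot_mem_LSet _ _, fun z hz => h z hz⟩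
  obtain ⟨w, ⟨hwy, hwz⟩, hwne⟩ := hw
  have hwx : LSet P w (x0 : P) = {⊥} := LSet_bot_of_le hwy (by rw [LSet_comm]; exact hxy)
  have hwmem : w ∈ ZDivX P := ⟨hwne, x0, x0.2.1, hwx⟩
  set ww : ZDivX P := ⟨w, hwmem⟩ with hww
  set qw : Q := ⟦ww⟧ with hqw
  have hqwc : qw ≠ c := by
    intro h
    rw [← hx0] at h
    have h2 : ann P (w : P) = ann P (x0 : P) := Quotient.exact h
    have hy : (y0 : P) ∈ ann P (x0 : P) := hxy
    rw [← h2] at hy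
    have : w ∈ LSet P w (y0 : P) := ⟨le_refl _, hwy⟩
    rw [hy] at this
    exact hwne this
  -- core contradiction argument for any leaf above w
  have core : ∀ y : ZDivX P, w ≤ (y : P) → (⟦y⟧ : Q) ≠ qw →
      LSet P (x0 : P) (y : P) = {⊥} → False := by
    intro y hwyle hne hxyle
    have hanne : ann P w ≠ ann P (y : P) := by
      intro h
      exact hne (Quotient.sound (show ann P (y : P) = ann P (w : P) from h.symm))
    have hsub : ann P (y : P) ⊆ ann P w := fun t ht => LSet_bot_of_le hwyle ht
    have ht : ∃ t, t ∈ ann P w ∧ t ∉ ann P (y : P) := by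
      by_contra h
      push_neg at h
      exact hanne (Set.Subset.antisymm (fun t ht => h t ht) hsub)
    obtain ⟨t, htw, hty⟩ := ht
    have htbot : t ≠ ⊥ := by
      intro h
      exact hty (h ▸ bot_mem_ann_s7 (y : P))
    have httz : t ∈ ZDivX P := ⟨htbot, w, hwne, by rw [LSet_comm]; exact htw⟩
    have hadj : (redGraph P).Adj qw ⟦(⟨t, httz⟩ : ZDivX P)⟧ := htw
    have hceq := hnb qw _ hqwc hadj
    rw [← hx0] at hceq
    have h2 : ann P t = ann P (x0 : P) := Quotient.exact hceq
    have hy : (y : P) ∈ ann P (x0 : P) := hxyle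
    rw [← h2] at hy
    exact hty ((mem_ann_comm P t (y : P)).mp hy)
  rcases eq_or_ne qw q1 with h | h
  · exact core z0 hwz (by rw [hz0, h]; exact hq21) hxz
  · exact core y0 hwy (by rw [hy0]; exact h.symm) hxy
end

section
/- Let P be a poset with least element 0 and Z(P)^× ≠ ∅. Let x ∈ Z(P)^× and let z ∈ Z(P)^× be such that ann(z) is an annihilator prime ideal of P. Then ann(x) ⊄ ann(z) if and only if L(x,z) = {0}; equivalently, nbd([x]) ⊆ nbd([z]) in Γ_E(P) if and only if the vertices [x] and [z] are not adjacent in Γ_E(P). -/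
/-- `I` is an ideal of the poset `P`: a nonempty downward-closed subset. -/
def IsIdeal (P : Type*) [PartialOrder P] [OrderBot P] (I : Set P) : Prop :=
  I.Nonempty ∧ ∀ x ∈ I, ∀ y : P, y ≤ x → y ∈ I

/-- `I` is a prime ideal of the poset `P`: a proper ideal such that
`L(x,y) ⊆ I` implies `x ∈ I` or `y ∈ I`. -/
def IsPrimeIdeal (P : Type*) [PartialOrder P] [OrderBot P] (I : Set P) : Prop :=
  IsIdeal P I ∧ I ≠ Set.univ ∧ ∀ x y : P, LSet P x y ⊆ I → x ∈ I ∨ y ∈ I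

/-- The family `𝔄 = {ann(x) : x ∈ P \ {0}}`. -/
def AnnFam (P : Type*) [PartialOrder P] [OrderBot P] : Set (Set P) :=
  {I | ∃ x : P, x ≠ ⊥ ∧ ann P x = I}

/-- `Ann(P)`, the set of annihilator prime ideals of `P`. -/
def AnnPrimes (P : Type*) [PartialOrder P] [OrderBot P] : Set (Set P) :=
  {I | IsPrimeIdeal P I ∧ ∃ x : P, ann P x = I}

/-- `P` satisfies the ACC for annihilators: every nonempty subfamily of `𝔄` has a
maximal element. -/
def ACCAnn (P : Type*) [PartialOrder P] [OrderBot P] : Prop :=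
  ∀ S : Set (Set P), S ⊆ AnnFam P → S.Nonempty → ∃ I ∈ S, ∀ J ∈ S, I ⊆ J → I = J

/-- For `x ∈ Z(P)^×` and `z ∈ Z(P)^×` with `ann(z)` an annihilator prime ideal:
`ann(x) ⊄ ann(z)` iff `L(x,z) = {0}`; equivalently, `nbd([x]) ⊆ nbd([z])` iff
`[x]` and `[z]` are not adjacent in `Γ_E(P)`. -/
theorem stmt11 (P : Type*) [PartialOrder P] [OrderBot P] (hZ : (ZDivX P).Nonempty)
    (x z : ZDivX P) (hp : IsPrimeIdeal P (ann P (z : P))) :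
    (¬ ann P (x : P) ⊆ ann P (z : P) ↔ LSet P (x : P) (z : P) = {⊥}) ∧
    ((redGraph P).neighborSet (Quotient.mk (annSetoid P) x)
        ⊆ (redGraph P).neighborSet (Quotient.mk (annSetoid P) z) ↔
      ¬ (redGraph P).Adj (Quotient.mk (annSetoid P) x) (Quotient.mk (annSetoid P) z)) := by

  have hbot : (⊥ : P) ∈ ann P (z : P) := by
    obtain ⟨⟨⟨a, ha⟩, hdown⟩, _, _⟩ := hp
    exact hdown a ha ⊥ bot_le
  have key : ¬ ann P (x : P) ⊆ ann P (z : P) ↔ LSet P (x : P) (z : P) = {⊥} := by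
    constructor
    · intro h
      by_contra hL
      apply h
      intro y hy
      have hy' : LSet P (x : P) y = {⊥} := hy
      have hsub : LSet P (x : P) y ⊆ ann P (z : P) := by
        rw [hy']; intro a ha
        rw [Set.mem_singleton_iff] at ha; subst ha; exact hbot
      rcases hp.2.2 _ _ hsub with hx | hyz
      · exact (hL (by rw [LSet_comm]; exact hx)).elim
      · exact hyz
    · intro hL hsub
      have hz : (z : P) ∈ ann P (x : P) := hL
      have hzz : LSet P (z : P) (z : P) = {⊥} := hsub hz
      have hm : (z : P) ∈ LSet P (z : P) (z : P) := ⟨le_refl _, le_refl _⟩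
      rw [hzz] at hm
      exact absurd hm z.2.1
  refine ⟨key, ?_, ?_⟩
  · intro hn hAdj
    have h1 : Quotient.mk (annSetoid P) z ∈
        (redGraph P).neighborSet (Quotient.mk (annSetoid P) x) := hAdj
    exact (redGraph P).irrefl (((redGraph P).mem_neighborSet _ _).1 (hn h1))
  · intro hna w hw
    revert hw
    refine Quotient.inductionOn w ?_
    intro a ha
    have hLxa : LSet P (x : P) (a : P) = {⊥} := ha
    have hLxz : ¬ LSet P (x : P) (z : P) = {⊥} := fun h => hna h
    have hsub : ann P (x : P) ⊆ ann P (z : P) := by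
      by_contra h; exact hLxz (key.1 h)
    have hza : (a : P) ∈ ann P (z : P) := hsub hLxa
    exact hza
end

section
/- Let P be a poset with least element 0 and Z(P)^× ≠ ∅. Then Ann(P) is a clique of the reduced zero-divisor graph Γ_E(P); that is, if x, y ∈ Z(P)^× are such that ann(x) and ann(y) are distinct annihilator prime ideals of P, then L(x,y) = {0}, so [x] and [y] are adjacent in Γ_E(P). -/
/-- `Ann(P)` is a clique of `Γ_E(P)`: if `ann(x)` and `ann(y)` are distinct annihilator
prime ideals (`x, y ∈ Z(P)^×`), then `L(x,y) = {0}`, i.e. `[x]` and `[y]` are adjacent. -/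
theorem stmt14 (P : Type*) [PartialOrder P] [OrderBot P] (hZ : (ZDivX P).Nonempty)
    (x y : ZDivX P) (hx : IsPrimeIdeal P (ann P (x : P)))
    (hy : IsPrimeIdeal P (ann P (y : P)))
    (hne : ann P (x : P) ≠ ann P (y : P)) :
    LSet P (x : P) (y : P) = {⊥} ∧
      (redGraph P).Adj (Quotient.mk (annSetoid P) x) (Quotient.mk (annSetoid P) y) := by
  have bot_mem : ∀ a : P, (⊥ : P) ∈ ann P a := by
    intro a
    show LSet P a ⊥ = {⊥}
    ext z
    constructor
    · intro hz; exact le_bot_iff.mp hz.2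
    · intro hz; rw [Set.mem_singleton_iff] at hz; subst hz; exact ⟨bot_le, bot_le⟩
  have key : LSet P (x : P) (y : P) = {⊥} := by
    by_contra hL
    have hyx : (y : P) ∉ ann P (x : P) := fun h => hL h
    have hxy : (x : P) ∉ ann P (y : P) := fun h => hL (by rw [LSet_comm]; exact h)
    have sub : ∀ a b : P, IsPrimeIdeal P (ann P b) → a ∉ ann P b →
        ann P a ⊆ ann P b := by
      intro a b hb hab w hw
      have hsub : LSet P a w ⊆ ann P b := by
        have hw' : LSet P a w = {⊥} := hw
        rw [hw']
        intro z hz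
        rw [Set.mem_singleton_iff] at hz; subst hz; exact bot_mem b
      rcases hb.2.2 a w hsub with h | h
      · exact absurd h hab
      · exact h
    exact hne (Set.Subset.antisymm (sub _ _ hy hxy) (sub _ _ hx hyx))
  exact ⟨key, key⟩
end

section
/- Let P be a poset with least element 0 and Z(P)^× ≠ ∅ satisfying the ascending chain condition for annihilators. Then every vertex of the reduced zero-divisor graph Γ_E(P) is adjacent to some vertex that is an annihilator prime ideal; that is, for every x ∈ Z(P)^× there exists z ∈ Z(P)^× with ann(z) an annihilator prime ideal of P and L(x,z) = {0}. Consequently, |Ann(P)| ≥ 2. -/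
/-- If `P` satisfies the ACC for annihilators, then every vertex of `Γ_E(P)` is adjacent
to an annihilator prime ideal; consequently, `|Ann(P)| ≥ 2`. -/
theorem stmt15 (P : Type*) [PartialOrder P] [OrderBot P] (hZ : (ZDivX P).Nonempty)
    (hacc : ACCAnn P) :
    (∀ x : ZDivX P, ∃ z : ZDivX P, IsPrimeIdeal P (ann P (z : P)) ∧
        LSet P (x : P) (z : P) = {⊥}) ∧
      2 ≤ (AnnPrimes P).encard := by
  have hL : ∀ x y : P, (LSet P x y = {⊥}) ↔ ∀ w, w ≤ x → w ≤ y → w = ⊥ := by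
    intro x y
    constructor
    · intro h w h1 h2
      have hw : w ∈ LSet P x y := ⟨h1, h2⟩
      rw [h] at hw; exact hw
    · intro h
      ext w
      constructor
      · rintro ⟨h1, h2⟩; exact h w h1 h2
      · rintro rfl; exact ⟨bot_le, bot_le⟩
  have main : ∀ x : ZDivX P, ∃ z : ZDivX P, IsPrimeIdeal P (ann P (z : P)) ∧
      LSet P (x : P) (z : P) = {⊥} := by
    intro x
    obtain ⟨hx0, y, hy0, hxy⟩ := x.2
    set S : Set (Set P) := {I | ∃ w : P, w ≠ ⊥ ∧ LSet P (x : P) w = {⊥} ∧ ann P w = I}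
      with hS
    have hSsub : S ⊆ AnnFam P := by rintro I ⟨w, hw0, _, hw⟩; exact ⟨w, hw0, hw⟩
    have hSne : S.Nonempty := ⟨ann P y, y, hy0, hxy, rfl⟩
    obtain ⟨I, hIS, hmax⟩ := hacc S hSsub hSne
    obtain ⟨z, hz0, hxz, rfl⟩ := hIS
    have hmax' : ∀ w : P, w ≠ ⊥ → ann P z ⊆ ann P w → ann P z = ann P w := by
      intro w hw0 hsub
      have hxmem : (x : P) ∈ ann P z := by
        rw [mem_ann_comm]; exact hxz
      have hx' := hsub hxmem
      rw [mem_ann_comm] at hx'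
      exact hmax _ ⟨w, hw0, hx', rfl⟩ hsub
    have hzZ : (z : P) ∈ ZDivX P := ⟨hz0, x, hx0, by rw [LSet_comm]; exact hxz⟩
    refine ⟨⟨z, hzZ⟩, ⟨⟨⟨⊥, ?_⟩, ?_⟩, ?_, ?_⟩, hxz⟩
    · exact (hL z ⊥).mpr fun w _ hw => le_bot_iff.mp hw
    · intro a ha b hba
      exact (hL z b).mpr fun w hwz hwb => (hL z a).mp ha w hwz (hwb.trans hba)
    · intro h
      have hzmem : z ∈ ann P z := h ▸ Set.mem_univ z
      exact hz0 ((hL z z).mp hzmem z le_rfl le_rfl)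
    · intro a b hab
      by_contra hcon
      push_neg at hcon
      obtain ⟨ha, hb⟩ := hcon
      have hc : ∃ c : P, c ≤ z ∧ c ≤ a ∧ c ≠ ⊥ := by
        by_contra hc
        push_neg at hc
        exact ha ((hL z a).mpr fun w h1 h2 => hc w h1 h2)
      obtain ⟨c, hcz, hca, hc0⟩ := hc
      have hsub : ann P z ⊆ ann P c := by
        intro y hy
        exact (hL c y).mpr fun w hwc hwy => (hL z y).mp hy w (hwc.trans hcz) hwy
      have heq : ann P z = ann P c := hmax' c hc0 hsub
      have hbc : b ∈ ann P c := by
        refine (hL c b).mpr fun w hwc hwb => ?_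
        have hwab : w ∈ LSet P a b := ⟨hwc.trans hca, hwb⟩
        have hwz : w ∈ ann P z := hab hwab
        rw [heq] at hwz
        exact (hL c w).mp hwz w hwc le_rfl
      rw [← heq] at hbc
      exact hb hbc
  refine ⟨main, ?_⟩
  obtain ⟨x, hx⟩ := hZ
  obtain ⟨z, hz, hxz⟩ := main ⟨x, hx⟩
  obtain ⟨w, hw, hzw⟩ := main z
  have hne : ann P (z : P) ≠ ann P (w : P) := by
    intro h
    have hwz : (w : P) ∈ ann P (z : P) := hzw
    rw [h] at hwz
    exact w.2.1 ((hL w w).mp hwz w le_rfl le_rfl)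
  have hsub : ({ann P (z : P), ann P (w : P)} : Set (Set P)) ⊆ AnnPrimes P := by
    rintro I (rfl | rfl)
    · exact ⟨hz, z, rfl⟩
    · exact ⟨hw, w, rfl⟩
  calc (2 : ℕ∞) = ({ann P (z : P), ann P (w : P)} : Set (Set P)).encard :=
        (Set.encard_pair hne).symm
    _ ≤ (AnnPrimes P).encard := Set.encard_mono hsub
end

section
/- Let P be a poset with least element 0 and Z(P)^× ≠ ∅. If the vertex set of the reduced zero-divisor graph Γ_E(P) is infinite, then every vertex of Γ_E(P) that is an annihilator prime ideal has infinite degree in Γ_E(P); that is, if z ∈ Z(P)^× is such that ann(z) is an annihilator prime ideal of P, then the neighborhood of [z] in Γ_E(P) is infinite. -/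
/-- If the vertex set of `Γ_E(P)` is infinite, then every annihilator prime ideal has
infinite degree in `Γ_E(P)`. -/
theorem stmt17 (P : Type*) [PartialOrder P] [OrderBot P] (hZ : (ZDivX P).Nonempty)
    (hinf : Infinite (Quotient (annSetoid P)))
    (z : ZDivX P) (hz : IsPrimeIdeal P (ann P (z : P))) :
    ((redGraph P).neighborSet (Quotient.mk (annSetoid P) z)).Infinite := by
  by_contra hfin
  rw [Set.not_infinite] at hfin
  set zc := Quotient.mk (annSetoid P) z with hzc
  set N := (redGraph P).neighborSet zc with hNdef
  -- L(x, ⊥) = {⊥} for all x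
  have hbot : ∀ x : P, LSet P x ⊥ = {⊥} := by
    intro x; ext w
    simp only [LSet, Set.mem_setOf_eq, Set.mem_singleton_iff, le_bot_iff]
    constructor
    · exact fun h => h.2
    · rintro rfl; exact ⟨bot_le, rfl⟩
  -- primality consequence
  have hprime : ∀ x u : P, x ∉ ann P (z : P) → LSet P x u = {⊥} → u ∈ ann P (z : P) := by
    intro x u hx h
    have hsub : LSet P x u ⊆ ann P (z : P) := by
      rw [h]
      intro w hw
      rw [Set.mem_singleton_iff] at hw
      subst hw
      show LSet P (z : P) ⊥ = {⊥}
      exact hbot (z : P)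
    rcases hz.2.2 x u hsub with h1 | h1
    · exact absurd h1 hx
    · exact h1
  -- the "fingerprint" map
  set g : Quotient (annSetoid P) → Set (Quotient (annSetoid P)) :=
    fun v => {u | u ∈ N ∧ (redGraph P).Adj v u} with hgdef
  -- key: for vertices not in ann(z), the fingerprint determines the annihilator
  have key : ∀ a b : ZDivX P, (a : P) ∉ ann P (z : P) → (b : P) ∉ ann P (z : P) →
      g (Quotient.mk (annSetoid P) a) = g (Quotient.mk (annSetoid P) b) →
      ann P (a : P) ⊆ ann P (b : P) := by
    intro a b ha hb hg u hu
    by_cases hu0 : u = ⊥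
    · subst hu0
      show LSet P (b : P) ⊥ = {⊥}
      exact hbot (b : P)
    · have hu' : LSet P (a : P) u = {⊥} := hu
      have huz : u ∈ ann P (z : P) := hprime (a : P) u ha hu'
      have huz' : LSet P (z : P) u = {⊥} := huz
      have huZ : u ∈ ZDivX P :=
        ⟨hu0, ⟨(z : P), z.2.1, by rw [LSet_comm]; exact huz'⟩⟩
      set uc := Quotient.mk (annSetoid P) (⟨u, huZ⟩ : ZDivX P) with hucdef
      have h1 : uc ∈ g (Quotient.mk (annSetoid P) a) := by
        constructor
        · show (redGraph P).Adj zc uc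
          exact huz'
        · show (redGraph P).Adj (Quotient.mk (annSetoid P) a) uc
          exact hu'
      rw [hg] at h1
      have h2 : (redGraph P).Adj (Quotient.mk (annSetoid P) b) uc := h1.2
      exact (h2 : LSet P (b : P) u = {⊥})
  -- the complement of N is finite
  have hBfin : {v : Quotient (annSetoid P) | v ∉ N}.Finite := by
    apply Set.Finite.of_finite_image (f := g)
    · apply Set.Finite.subset hfin.finite_subsets
      rintro S ⟨v, hv, rfl⟩
      intro u hu
      exact hu.1
    · intro v hv w hw hgvw
      revert hv hw hgvw
      refine Quotient.inductionOn₂ v w ?_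
      intro a b ha hb hgab
      have ha' : (a : P) ∉ ann P (z : P) := fun h =>
        ha (show (redGraph P).Adj zc (Quotient.mk (annSetoid P) a) from h)
      have hb' : (b : P) ∉ ann P (z : P) := fun h =>
        hb (show (redGraph P).Adj zc (Quotient.mk (annSetoid P) b) from h)
      apply Quotient.sound
      exact Set.Subset.antisymm (key a b ha' hb' hgab) (key b a hb' ha' hgab.symm)
  have hfinT : Finite (Quotient (annSetoid P)) := by
    have huniv : (Set.univ : Set (Quotient (annSetoid P))).Finite := by
      apply Set.Finite.subset (hfin.union hBfin)
      intro v _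
      by_cases h : v ∈ N
      · exact Or.inl h
      · exact Or.inr h
    exact Set.finite_univ_iff.mp huniv
  exact hfinT.not_infinite hinf
end

section
/- Let P be a poset with least element 0 and Z(P)^× ≠ ∅. If the zero-divisor graph Γ(P) is r-regular for some natural number r (i.e., every vertex of Γ(P) has degree exactly r), then the reduced zero-divisor graph Γ_E(P) is a complete graph. -/
lemma LSet_eq_bot_iff (P : Type*) [PartialOrder P] [OrderBot P] (x y : P) :
    LSet P x y = {⊥} ↔ ∀ z, z ≤ x → z ≤ y → z = ⊥ := by
  constructor
  · intro h z h1 h2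
    have : z ∈ LSet P x y := ⟨h1, h2⟩
    rw [h] at this; exact this
  · intro h
    ext z
    simp only [LSet, Set.mem_setOf_eq, Set.mem_singleton_iff]
    exact ⟨fun hz => h z hz.1 hz.2, fun hz => by subst hz; exact ⟨bot_le, bot_le⟩⟩

lemma ann_subset_of_nbr (P : Type*) [PartialOrder P] [OrderBot P] (x y : ZDivX P)
    (h : (zdGraph P).neighborSet x ⊆ (zdGraph P).neighborSet y) :
    ann P (x : P) ⊆ ann P (y : P) := by
  intro w hw
  have hw' : LSet P (x : P) w = {⊥} := hw
  by_cases hwb : w = ⊥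
  · subst hwb
    show LSet P (y : P) ⊥ = {⊥}
    rw [LSet_eq_bot_iff]
    exact fun z _ h2 => le_bot_iff.mp h2
  · have hwZ : w ∈ ZDivX P := ⟨hwb, x, x.2.1, by rw [LSet_comm]; exact hw'⟩
    have hwx : (x : P) ≠ w := by
      intro he
      have hx : (x : P) ∈ LSet P (x : P) w := ⟨le_refl _, he ▸ le_refl _⟩
      rw [hw'] at hx
      exact x.2.1 hx
    have hmem : (⟨w, hwZ⟩ : ZDivX P) ∈ (zdGraph P).neighborSet x := ⟨hwx, hw'⟩
    exact (h hmem).2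

/-- If `Γ(P)` is an `r`-regular graph, then `Γ_E(P)` is a complete graph. -/
theorem stmt19 (P : Type*) [PartialOrder P] [OrderBot P] (hZ : (ZDivX P).Nonempty)
    (r : ℕ) (hreg : ∀ v : ZDivX P, ((zdGraph P).neighborSet v).encard = r) :
    redGraph P = ⊤ := by
  ext a b
  refine Quotient.inductionOn₂ a b ?_
  intro x y
  constructor
  · intro h
    exact h.ne
  · intro hne
    show LSet P (x : P) (y : P) = {⊥}
    by_contra hL
    rw [LSet_eq_bot_iff] at hL
    push_neg at hL
    obtain ⟨z, hzx, hzy, hzb⟩ := hL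
    -- z is a nonzero zero-divisor
    obtain ⟨_, w0, hw0b, hw0⟩ := x.2
    have hzw0 : LSet P z w0 = {⊥} := by
      rw [LSet_eq_bot_iff] at hw0 ⊢
      exact fun u hu1 hu2 => hw0 u (hu1.trans hzx) hu2
    have hzZ : z ∈ ZDivX P := ⟨hzb, w0, hw0b, hzw0⟩
    set zv : ZDivX P := ⟨z, hzZ⟩ with hzv
    have key : ∀ v : ZDivX P, z ≤ (v : P) →
        (zdGraph P).neighborSet v = (zdGraph P).neighborSet zv := by
      intro v hzv'
      have hsub : (zdGraph P).neighborSet v ⊆ (zdGraph P).neighborSet zv := by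
        intro w hw
        obtain ⟨hne', hLw⟩ := hw
        refine ⟨?_, ?_⟩
        · intro he
          have : z ∈ LSet P (v : P) (w : P) := ⟨hzv', le_of_eq he⟩
          rw [hLw] at this
          exact hzb this
        · rw [LSet_eq_bot_iff] at hLw ⊢
          exact fun u hu1 hu2 => hLw u (hu1.trans hzv') hu2
      have hfin : ((zdGraph P).neighborSet zv).Finite :=
        Set.finite_of_encard_eq_coe (hreg zv)
      exact hfin.eq_of_subset_of_encard_le' hsub
        (by rw [hreg zv, hreg v])
    have hxz := key x hzx
    have hyz := key y hzy
    have hNxy : (zdGraph P).neighborSet x = (zdGraph P).neighborSet y := by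
      rw [hxz, hyz]
    have hann : ann P (x : P) = ann P (y : P) :=
      Set.Subset.antisymm (ann_subset_of_nbr P x y hNxy.subset)
        (ann_subset_of_nbr P y x hNxy.symm.subset)
    exact hne (Quotient.sound hann)
end
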